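/- Let F be a non-trivial clustering functor with clustering parameter δ > 0, i.e., F(Λ_ε) is the single two-point cluster {p, q} for all 0 < ε ≤ δ, and F(Λ_ε) is the pair of singleton clusters {p}, {q} for all ε > δ. Then for every finite metric space (X, d_X), the cover F(X, d_X) refines the single-linkage clustering SL_δ(X): every cluster of F(X, d_X) is contained in a connected component of the δ-threshold graph of X. -/

import Mathlib

/-- A cover of a set: a collection of nonempty subsets whose union is everything. -/
def IsCover {X : Type*} (C : Set (Set X)) : Prop :=
  (∀ A ∈ C, A.Nonempty) ∧ ⋃₀ C = Set.univ

/-- A non-nested flag cover: a cover that is non-nested and satisfies the flag condition. -/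
def IsFlagCover {X : Type*} (C : Set (Set X)) : Prop :=
  IsCover C ∧
  (∀ A ∈ C, ∀ B ∈ C, A ⊆ B → A = B) ∧
  (∀ S : Set X, (∀ x ∈ S, ∀ y ∈ S, ∃ A ∈ C, x ∈ A ∧ y ∈ A) → ∃ A ∈ C, S ⊆ A)

/-- A nonexpansive map between metric spaces. -/
def Nonexpansive {X Y : Type*} [MetricSpace X] [MetricSpace Y] (f : X → Y) : Prop :=
  ∀ x x' : X, dist (f x) (f x') ≤ dist x x'

/-- The two-point metric space `Λ_ε` on `Bool` (`p := false`, `q := true`),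
with `dist p q = ε`. -/
noncomputable def lambdaMet {ε : ℝ} (hε : 0 < ε) : MetricSpace Bool :=
  MetricSpace.induced (fun b => if b then ε else 0)
    (by intro a b h; cases a <;> cases b <;> simp_all)
    inferInstance

/-- A clustering functor: an assignment of a non-nested flag cover to every finite
metric space, functorial with respect to nonexpansive maps. -/
structure ClusteringFunctor where
  /-- the flag cover assigned to a finite metric space -/
  cover : (X : Type) → [inst1 : MetricSpace X] → [inst2 : Fintype X] →
    [inst3 : Nonempty X] → Set (Set X)
  flag : ∀ (X : Type) [MetricSpace X] [Fintype X] [Nonempty X], IsFlagCover (cover X)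
  functorial : ∀ (X Y : Type) [MetricSpace X] [Fintype X] [Nonempty X]
      [MetricSpace Y] [Fintype Y] [Nonempty Y]
      (f : X → Y), Nonexpansive f →
      ∀ A ∈ cover X, ∃ B ∈ cover Y, A ⊆ f ⁻¹' B

/-- The `δ`-threshold graph of a metric space: distinct points are adjacent
iff their distance is at most `δ`. -/
def thresholdGraph (X : Type*) [MetricSpace X] (δ : ℝ) : SimpleGraph X where
  Adj x y := x ≠ y ∧ dist x y ≤ δ
  symm := ⟨fun x y h => ⟨h.1.symm, by rw [dist_comm]; exact h.2⟩⟩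
  loopless := ⟨fun x h => h.1 rfl⟩

/-- a non-trivial clustering functor `F` with clustering parameter `δ > 0`
(it merges `Λ_ε` for `0 < ε ≤ δ` and separates `Λ_ε` for `ε > δ`) has output refining
single linkage: every cluster of `F(X)` is contained in a connected component of the
`δ`-threshold graph of `X`. -/
theorem functor_refines_SL (F : ClusteringFunctor) (δ : ℝ) (hδ : 0 < δ)
    (h1 : ∀ (ε : ℝ) (hε : 0 < ε), ε ≤ δ →
      F.cover Bool (inst1 := lambdaMet hε) = {{false, true}})
    (h2 : ∀ (ε : ℝ) (hε : 0 < ε), δ < ε →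
      F.cover Bool (inst1 := lambdaMet hε) = {{false}, {true}}) :
    ∀ (X : Type) [MetricSpace X] [Fintype X] [Nonempty X],
      ∀ A ∈ F.cover X,
        ∃ c : (thresholdGraph X δ).ConnectedComponent, A ⊆ c.supp := by
  intro X _ _ _ A hA
  classical
  obtain ⟨x0, hx0⟩ := (F.flag X).1.1 A hA
  set G := thresholdGraph X δ with hG
  set c := G.connectedComponentMk x0 with hc
  have hx0c : x0 ∈ c.supp := (SimpleGraph.ConnectedComponent.mem_supp_iff _ _).mpr rfl
  refine ⟨c, ?_⟩
  by_cases hall : ∀ x : X, x ∈ c.supp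
  · intro x _; exact hall x
  push_neg at hall
  obtain ⟨y0, hy0⟩ := hall
  have key : ∀ x y : X, x ∈ c.supp → y ∉ c.supp → δ < dist x y := by
    intro x y hx hy
    by_contra h
    push_neg at h
    have hxy : x ≠ y := by rintro rfl; exact hy hx
    have hadj : G.Adj x y := ⟨hxy, h⟩
    apply hy
    rw [SimpleGraph.ConnectedComponent.mem_supp_iff] at hx
    rw [SimpleGraph.ConnectedComponent.mem_supp_iff, ← hx]
    exact SimpleGraph.ConnectedComponent.sound hadj.symm.reachable
  set T : Finset ℝ := Finset.image (fun p : X × X => dist p.1 p.2)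
    (Finset.univ.filter (fun p : X × X => p.1 ∈ c.supp ∧ p.2 ∉ c.supp)) with hT
  have hTmem : ∀ x y : X, x ∈ c.supp → y ∉ c.supp → dist x y ∈ T := by
    intro x y hx hy
    rw [hT]
    simp only [Finset.mem_image, Finset.mem_filter, Finset.mem_univ, true_and]
    exact ⟨(x, y), ⟨hx, hy⟩, rfl⟩
  have hTne : T.Nonempty := ⟨dist x0 y0, hTmem x0 y0 hx0c hy0⟩
  set ε : ℝ := T.min' hTne with hε'
  have hδε : δ < ε := by
    rw [hε', Finset.lt_min'_iff]
    intro a ha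
    rw [hT] at ha
    simp only [Finset.mem_image, Finset.mem_filter, Finset.mem_univ, true_and] at ha
    obtain ⟨⟨x, y⟩, ⟨hx, hy⟩, rfl⟩ := ha
    exact key x y hx hy
  have hε : (0 : ℝ) < ε := hδ.trans hδε
  have cross : ∀ x y : X, x ∈ c.supp → y ∉ c.supp → ε ≤ dist x y :=
    fun x y hx hy => T.min'_le _ (hTmem x y hx hy)
  set f : X → Bool := fun x => if x ∈ c.supp then false else true with hf
  have ffalse : ∀ x : X, x ∈ c.supp → f x = false := fun x hx => if_pos hx
  have ftrue : ∀ x : X, x ∉ c.supp → f x = true := fun x hx => if_neg hx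
  have d0e : dist (0 : ℝ) ε = ε := by
    rw [dist_comm, Real.dist_eq, sub_zero, abs_of_pos hε]
  have hnon : @Nonexpansive X Bool _ (lambdaMet hε) f := by
    intro x x'
    have hd : @dist Bool (lambdaMet hε).toDist (f x) (f x')
        = dist (if f x then ε else 0 : ℝ) (if f x' then ε else 0) := rfl
    rw [hd]
    by_cases hx : x ∈ c.supp <;> by_cases hx' : x' ∈ c.supp
    · rw [ffalse x hx, ffalse x' hx']
      simpa using dist_nonneg
    · rw [ffalse x hx, ftrue x' hx']
      simpa [d0e] using cross x x' hx hx'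
    · rw [ftrue x hx, ffalse x' hx']
      have := cross x' x hx' hx
      rw [dist_comm] at this
      simpa [dist_comm, d0e] using this
    · rw [ftrue x hx, ftrue x' hx']
      simpa using dist_nonneg
  obtain ⟨B, hB, hAB⟩ := @ClusteringFunctor.functorial F X Bool _ _ _
    (lambdaMet hε) _ _ f hnon A hA
  rw [h2 ε hε hδε] at hB
  have hx0B : f x0 ∈ B := hAB hx0
  rw [ffalse x0 hx0c] at hx0B
  rcases hB with hB | hB
  · intro x hx
    have hfx : f x ∈ B := hAB hx
    rw [hB, Set.mem_singleton_iff] at hfx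
    by_contra hxc
    rw [ftrue x hxc] at hfx
    exact Bool.noConfusion hfx
  · exfalso
    rw [Set.mem_singleton_iff] at hB
    rw [hB, Set.mem_singleton_iff] at hx0B
    exact Bool.noConfusion hx0B
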